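/- L¹-Lipschitz continuity of the solution (Lemma 3.5). Let ξ : ℝ^{D×D} → ℝ be continuous, let t⋆ > 0, and let f : [0,t⋆) × Q_∞ → ℝ be Fréchet differentiable at every point (jointly in (t,q), with the q-derivative taken with respect to the L² norm and represented by a gradient ∇_q f(t,q) ∈ L²) such that for every (t,q) ∈ [0,t⋆) × Q_∞: ∇_q f(t,q) ∈ L^∞ with |∇_q f(t,q)|_{L^∞} ≤ 1, and ∂_t f(t,q) = ∫₀¹ ξ(∇_q f(t,q)(u)) du. Then for all (t,q), (t′,q′) ∈ [0,t⋆) × Q_∞ one has |f(t,q) − f(t′,q′)| ≤ |q − q′|_{L¹} + |t − t′| · sup_{a ∈ ℝ^{D×D}, |a| ≤ 1} |ξ(a)|. In particular, f extends to a continuous function on [0,t⋆) × Q₁ (with Q₁ carrying the L¹ norm). -/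

import Mathlib

noncomputable section

open MeasureTheory Set Filter Topology RealInnerProductSpace

/-- `D×D` real matrices with the Frobenius (Euclidean) norm. -/
abbrev Mat (D : ℕ) : Type := EuclideanSpace ℝ (Fin D × Fin D)

/-- symmetric positive semidefinite matrices -/
def Mat.PSD {D : ℕ} (a : Mat D) : Prop :=
  (∀ i j : Fin D, a (i, j) = a (j, i)) ∧
    ∀ v : Fin D → ℝ, 0 ≤ ∑ i, ∑ j, v i * a (i, j) * v j

/-- the unit interval `[0,1)` as a type -/
abbrev UI : Type := Set.Ico (0 : ℝ) 1

abbrev SPath (D : ℕ) : Type := UI → Mat D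

/-- Lebesgue measure on `[0,1)` -/
instance : MeasureSpace UI := ⟨(volume : Measure ℝ).comap Subtype.val⟩

/-- càdlàg increasing `S^D_+`-valued path, i.e. a member of `Q` -/
def IsQ {D : ℕ} (p : SPath D) : Prop :=
  (∀ s, Mat.PSD (p s)) ∧
  (∀ s t : UI, s ≤ t → Mat.PSD (p t - p s)) ∧
  (∀ s : UI, ContinuousWithinAt p (Set.Ici s) s) ∧
  (∀ s : UI, (0 : ℝ) < (s : ℝ) →
    ∃ L : Mat D, Tendsto p (nhdsWithin s (Set.Iio s)) (nhds L))

/-- `L^∞` norm (sup norm on `[0,1)`) -/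
def supN {D : ℕ} (p : SPath D) : ℝ := sSup (Set.range fun s => ‖p s‖)

/-- bounded path, i.e. member of `L^∞` -/
def Bdd {D : ℕ} (p : SPath D) : Prop := BddAbove (Set.range fun s => ‖p s‖)

/-- `L¹` norm -/
def L1N {D : ℕ} (p : SPath D) : ℝ := ∫ s, ‖p s‖

/-- `L²` norm -/
def L2N {D : ℕ} (p : SPath D) : ℝ := Real.sqrt (∫ s, ‖p s‖ ^ 2)

/-- `L²` inner product -/
def L2I {D : ℕ} (p q : SPath D) : ℝ := ∫ s, ⟪p s, q s⟫

def Qinf (D : ℕ) : Set (SPath D) := {p | IsQ p ∧ Bdd p}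

def Qle1 (D : ℕ) : Set (SPath D) := {p | IsQ p ∧ ∀ s, ‖p s‖ ≤ 1}

def Q1 (D : ℕ) : Set (SPath D) := {p | IsQ p ∧ Integrable fun s => ‖p s‖}

def Q2 (D : ℕ) : Set (SPath D) := {p | IsQ p ∧ Integrable fun s => ‖p s‖ ^ 2}

/-- the path `s ↦ ∇ξ(p(s))` -/
def gradPath {D : ℕ} (ξ : Mat D → ℝ) (p : SPath D) : SPath D := fun s => gradient ξ (p s)

/-- `θ(a) = a·∇ξ(a) − ξ(a)` -/
def theta {D : ℕ} (ξ : Mat D → ℝ) (a : Mat D) : ℝ := ⟪a, gradient ξ a⟫ - ξ a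

/-- `∇ξ` is `L`-Lipschitz on the unit ball `B` -/
def LipOnB {D : ℕ} (ξ : Mat D → ℝ) (L : ℝ) : Prop :=
  ∀ a b : Mat D, ‖a‖ ≤ 1 → ‖b‖ ≤ 1 → ‖gradient ξ a - gradient ξ b‖ ≤ L * ‖a - b‖

variable {D : ℕ}

lemma quad_single (a : Mat D) (i j : Fin D) :
    ∑ k, ∑ l, (if k = i then (1:ℝ) else 0) * a (k, l) * (if l = j then 1 else 0) = a (i, j) := by
  simp [ite_mul, mul_ite, Finset.sum_ite_eq']

lemma quad_pair (a : Mat D) (i j : Fin D) :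
    ∑ k, ∑ l, ((if k = i then (1:ℝ) else 0) + (if k = j then 1 else 0)) * a (k, l) *
      ((if l = i then (1:ℝ) else 0) + (if l = j then 1 else 0)) =
      a (i, i) + a (i, j) + a (j, i) + a (j, j) := by
  have expand : ∀ k l : Fin D,
      ((if k = i then (1:ℝ) else 0) + (if k = j then 1 else 0)) * a (k, l) *
      ((if l = i then (1:ℝ) else 0) + (if l = j then 1 else 0)) =
      (if k = i then (1:ℝ) else 0) * a (k, l) * (if l = i then 1 else 0) +
      (if k = i then (1:ℝ) else 0) * a (k, l) * (if l = j then 1 else 0) +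
      (if k = j then (1:ℝ) else 0) * a (k, l) * (if l = i then 1 else 0) +
      (if k = j then (1:ℝ) else 0) * a (k, l) * (if l = j then 1 else 0) := by
    intro k l; ring
  simp_rw [expand, Finset.sum_add_distrib, quad_single]

lemma psd_entry_nonneg {a : Mat D} (ha : Mat.PSD a) (i j : Fin D) :
    0 ≤ a (i, i) + a (i, j) + a (j, i) + a (j, j) := by
  have := ha.2 (fun k => (if k = i then (1:ℝ) else 0) + (if k = j then 1 else 0))
  rwa [quad_pair] at this

lemma psd_diag_nonneg {a : Mat D} (ha : Mat.PSD a) (i : Fin D) : 0 ≤ a (i, i) := by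
  have := ha.2 (fun k => (if k = i then (1:ℝ) else 0))
  rwa [quad_single] at this

lemma IsQ.measurable {p : SPath D} (hp : IsQ p) : Measurable p := by
  refine ((MeasurableEquiv.toLp 2 (Fin D × Fin D → ℝ)).symm.measurableEmbedding.measurable_comp_iff (f := p)).mp ?_
  apply measurable_pi_lambda
  rintro ⟨i, j⟩
  show Measurable fun s => p s (i, j)
  have hdiag : ∀ i : Fin D, Monotone fun s => p s (i, i) := by
    intro i s t hst
    have h := psd_diag_nonneg (hp.2.1 s t hst) i
    simp only [PiLp.sub_apply] at h
    dsimp only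
    linarith
  have hsum : Monotone fun s => p s (i, i) + p s (i, j) + p s (j, i) + p s (j, j) := by
    intro s t hst
    have h := psd_entry_nonneg (hp.2.1 s t hst) i j
    simp only [PiLp.sub_apply] at h
    dsimp only
    linarith
  have key : (fun s => p s (i, j)) = fun s =>
      ((p s (i, i) + p s (i, j) + p s (j, i) + p s (j, j)) - p s (i, i) - p s (j, j)) / 2 := by
    funext s
    have := (hp.1 s).1 i j
    linarith
  rw [key]
  exact (((hsum.measurable.sub (hdiag i).measurable).sub (hdiag j).measurable)).div_const 2

lemma Mat.PSD.add {a b : Mat D} (ha : Mat.PSD a) (hb : Mat.PSD b) : Mat.PSD (a + b) := by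
  constructor
  · intro i j; simp only [PiLp.add_apply]; rw [ha.1 i j, hb.1 i j]
  · intro v
    have h : ∀ i j : Fin D, v i * (a + b) (i, j) * v j =
        v i * a (i, j) * v j + v i * b (i, j) * v j := by
      intro i j; simp only [PiLp.add_apply]; ring
    simp_rw [h, Finset.sum_add_distrib]
    exact add_nonneg (ha.2 v) (hb.2 v)

lemma Mat.PSD.smul {a : Mat D} (ha : Mat.PSD a) {r : ℝ} (hr : 0 ≤ r) : Mat.PSD (r • a) := by
  constructor
  · intro i j; simp only [PiLp.smul_apply, smul_eq_mul]; rw [ha.1 i j]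
  · intro v
    have h : ∀ i j : Fin D, v i * (r • a) (i, j) * v j = r * (v i * a (i, j) * v j) := by
      intro i j; simp only [PiLp.smul_apply, smul_eq_mul]; ring
    simp_rw [h, ← Finset.mul_sum]
    exact mul_nonneg hr (ha.2 v)

lemma Qinf_zero : (0 : SPath D) ∈ Qinf D := by
  have h0 : Mat.PSD (0 : Mat D) := by
    constructor
    · intro i j; simp
    · intro v; simp
  refine ⟨⟨fun s => h0, fun s t hst => by simpa using h0, fun s => ?_, fun s hs => ⟨0, ?_⟩⟩, ?_⟩
  · exact continuousWithinAt_const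
  · exact tendsto_const_nhds
  · exact ⟨0, by rintro x ⟨s, rfl⟩; simp⟩

lemma Qinf_convex {q q' : SPath D} (hq : q ∈ Qinf D) (hq' : q' ∈ Qinf D) {r : ℝ}
    (hr0 : 0 ≤ r) (hr1 : r ≤ 1) : (fun s => q s + r • (q' s - q s)) ∈ Qinf D := by
  have hrw : ∀ s, q s + r • (q' s - q s) = (1 - r) • q s + r • q' s := by
    intro s; module
  constructor
  · refine ⟨fun s => ?_, fun s t hst => ?_, fun s => ?_, fun s hs => ?_⟩
    · dsimp only
      rw [hrw s]
      exact (((hq.1.1 s).smul (by linarith)).add ((hq'.1.1 s).smul hr0))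
    · have : (fun u => q u + r • (q' u - q u)) t - (fun u => q u + r • (q' u - q u)) s =
          (1 - r) • (q t - q s) + r • (q' t - q' s) := by
        show (q t + r • (q' t - q t)) - (q s + r • (q' s - q s)) = _
        module
      rw [this]
      exact (((hq.1.2.1 s t hst).smul (by linarith)).add ((hq'.1.2.1 s t hst).smul hr0))
    · simp only [hrw]
      exact (((hq.1.2.2.1 s).const_smul (1 - r)).add ((hq'.1.2.2.1 s).const_smul r))
    · obtain ⟨L, hL⟩ := hq.1.2.2.2 s hs
      obtain ⟨L', hL'⟩ := hq'.1.2.2.2 s hs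
      refine ⟨(1 - r) • L + r • L', ?_⟩
      simp only [hrw]
      exact ((hL.const_smul (1 - r)).add (hL'.const_smul r))
  · obtain ⟨C, hC⟩ := hq.2
    obtain ⟨C', hC'⟩ := hq'.2
    refine ⟨C + C', ?_⟩
    rintro x ⟨s, rfl⟩
    simp only [hrw]
    calc ‖(1 - r) • q s + r • q' s‖ ≤ ‖(1 - r) • q s‖ + ‖r • q' s‖ := norm_add_le _ _
      _ = (1 - r) * ‖q s‖ + r * ‖q' s‖ := by
          rw [norm_smul, norm_smul, Real.norm_eq_abs, Real.norm_eq_abs,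
            abs_of_nonneg (by linarith : (0:ℝ) ≤ 1 - r), abs_of_nonneg hr0]
      _ ≤ 1 * C + 1 * C' := by
          have h1 : ‖q s‖ ≤ C := hC ⟨s, rfl⟩
          have h2 : ‖q' s‖ ≤ C' := hC' ⟨s, rfl⟩
          have h3 : (0:ℝ) ≤ ‖q s‖ := norm_nonneg _
          have h4 : (0:ℝ) ≤ ‖q' s‖ := norm_nonneg _
          nlinarith
      _ = C + C' := by ring

instance : IsProbabilityMeasure (volume : Measure UI) := by
  constructor
  rw [show (volume : Measure UI) = (volume : Measure ℝ).comap Subtype.val from rfl,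
    (MeasurableEmbedding.subtype_coe measurableSet_Ico).comap_apply,
    Set.image_univ, Subtype.range_coe, Real.volume_Ico]
  norm_num

lemma Qinf_integrable {p : SPath D} (hp : p ∈ Qinf D) : Integrable p := by
  obtain ⟨C, hC⟩ := hp.2
  exact (integrable_const C).mono' hp.1.measurable.aestronglyMeasurable
    (Filter.Eventually.of_forall fun s => hC (Set.mem_range_self s))

lemma L1N_nonneg (p : SPath D) : 0 ≤ L1N p := integral_nonneg fun s => norm_nonneg _

lemma L1N_self_sub (q : SPath D) : L1N (q - q) = 0 := by simp [L1N]

lemma L1N_sub_comm (q q' : SPath D) : L1N (q - q') = L1N (q' - q) := by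
  unfold L1N
  congr 1
  funext s
  exact norm_sub_rev _ _

lemma L1N_triangle {x y : SPath D} (hx : Integrable x) (hy : Integrable y) :
    L1N (x + y) ≤ L1N x + L1N y := by
  unfold L1N
  rw [← integral_add hx.norm hy.norm]
  exact integral_mono (hx.add hy).norm (hx.norm.add hy.norm) fun s => norm_add_le _ _

lemma L2N_nonneg (p : SPath D) : 0 ≤ L2N p := Real.sqrt_nonneg _

lemma L2N_smul (c : ℝ) (x : SPath D) : L2N (fun s => c • x s) = |c| * L2N x := by
  unfold L2N
  have h : ∀ s, ‖c • x s‖ ^ 2 = c ^ 2 * ‖x s‖ ^ 2 := by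
    intro s
    rw [norm_smul, mul_pow, Real.norm_eq_abs, sq_abs]
  simp_rw [h]
  rw [MeasureTheory.integral_const_mul, Real.sqrt_mul (sq_nonneg c), Real.sqrt_sq_eq_abs]

lemma L2I_smul (c : ℝ) (x g : SPath D) : L2I (fun s => c • x s) g = c * L2I x g := by
  unfold L2I
  simp_rw [real_inner_smul_left]
  exact MeasureTheory.integral_const_mul c _

lemma abs_integral_xi_le {ξ : Mat D → ℝ} {M : ℝ} (hM0 : 0 ≤ M)
    (hM : ∀ a : Mat D, ‖a‖ ≤ 1 → |ξ a| ≤ M) {g : SPath D} (hg : ∀ u, ‖g u‖ ≤ 1) :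
    |∫ u, ξ (g u)| ≤ M := by
  by_cases h : Integrable (fun u => ξ (g u)) volume
  · calc |∫ u, ξ (g u)| ≤ ∫ u, |ξ (g u)| := by
          simpa [Real.norm_eq_abs] using norm_integral_le_integral_norm (fun u => ξ (g u))
      _ ≤ ∫ _u : UI, M := integral_mono h.abs (integrable_const M) fun u => hM _ (hg u)
      _ = M := by simp
  · rw [integral_undef h]; simpa using hM0

lemma abs_L2I_le_L1N {x g : SPath D} (hx : Integrable x) (hg : ∀ s, ‖g s‖ ≤ 1) :
    |L2I x g| ≤ L1N x := by
  unfold L2I L1N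
  by_cases h : Integrable (fun s => (⟪x s, g s⟫ : ℝ)) volume
  · calc |∫ s, (⟪x s, g s⟫ : ℝ)| ≤ ∫ s, |(⟪x s, g s⟫ : ℝ)| := by
          simpa [Real.norm_eq_abs] using norm_integral_le_integral_norm fun s => (⟪x s, g s⟫ : ℝ)
      _ ≤ ∫ s, ‖x s‖ := by
          refine integral_mono h.abs hx.norm fun s => ?_
          calc |(⟪x s, g s⟫ : ℝ)| ≤ ‖x s‖ * ‖g s‖ := abs_real_inner_le_norm _ _
            _ ≤ ‖x s‖ := mul_le_of_le_one_right (norm_nonneg _) (hg s)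
  · rw [integral_undef h]
    simpa [L1N] using L1N_nonneg x

lemma key_lipschitz {D : ℕ} (ξ : Mat D → ℝ) {M : ℝ} (hM0 : 0 ≤ M)
    (hM : ∀ a : Mat D, ‖a‖ ≤ 1 → |ξ a| ≤ M)
    (tstar : ℝ) (f ft : ℝ → SPath D → ℝ) (fq : ℝ → SPath D → SPath D)
    (hfdiff : ∀ t : ℝ, 0 ≤ t → t < tstar → ∀ q ∈ Qinf D,
      ∀ ε > 0, ∃ δ > 0, ∀ t' : ℝ, 0 ≤ t' → t' < tstar → ∀ q' ∈ Qinf D,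
        |t' - t| + L2N (q' - q) ≤ δ →
        |f t' q' - f t q - (t' - t) * ft t q - L2I (q' - q) (fq t q)| ≤
          ε * (|t' - t| + L2N (q' - q)))
    (hfqbdd : ∀ t : ℝ, 0 ≤ t → t < tstar → ∀ q ∈ Qinf D, ∀ s : UI, ‖fq t q s‖ ≤ 1)
    (hhj : ∀ t : ℝ, 0 ≤ t → t < tstar → ∀ q ∈ Qinf D, ft t q = ∫ u, ξ (fq t q u))
    {t t' : ℝ} (ht0 : 0 ≤ t) (ht : t < tstar) (ht0' : 0 ≤ t') (ht' : t' < tstar)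
    {q q' : SPath D} (hq : q ∈ Qinf D) (hq' : q' ∈ Qinf D) :
    |f t q - f t' q'| ≤ L1N (q - q') + |t - t'| * M := by
  set τ : ℝ → ℝ := fun r => t + r * (t' - t) with hτdef
  set pf : ℝ → SPath D := fun r => fun s => q s + r • (q' s - q s) with hpfdef
  set g : ℝ → ℝ := fun r => f (τ r) (pf r) with hgdef
  set A : ℝ → ℝ := fun r => (t' - t) * ft (τ r) (pf r) + L2I (q' - q) (fq (τ r) (pf r))
    with hAdef
  have hτ0 : ∀ r ∈ Set.Icc (0:ℝ) 1, 0 ≤ τ r := by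
    rintro r ⟨hr0, hr1⟩
    simp only [hτdef]
    nlinarith
  have hτ1 : ∀ r ∈ Set.Icc (0:ℝ) 1, τ r < tstar := by
    rintro r ⟨hr0, hr1⟩
    simp only [hτdef]
    nlinarith [mul_nonneg hr0 (sub_pos.mpr ht').le, mul_nonneg (sub_nonneg.mpr hr1) (sub_pos.mpr ht).le]
  have hmem : ∀ r ∈ Set.Icc (0:ℝ) 1, pf r ∈ Qinf D := fun r hr => Qinf_convex hq hq' hr.1 hr.2
  have hsub : ∀ r r' : ℝ, pf r' - pf r = fun s => (r' - r) • ((q' - q) s) := by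
    intro r r'
    funext s
    show (q s + r' • (q' s - q s)) - (q s + r • (q' s - q s)) = (r' - r) • (q' s - q s)
    module
  set C := |t' - t| + L2N (q' - q) with hCdef
  have hC0 : 0 ≤ C := add_nonneg (abs_nonneg _) (L2N_nonneg _)
  have hderiv : ∀ r ∈ Set.Icc (0:ℝ) 1, HasDerivWithinAt g (A r) (Set.Icc 0 1) r := by
    intro r hr
    rw [hasDerivWithinAt_iff_isLittleO, Asymptotics.isLittleO_iff]
    intro c hc
    obtain ⟨δ, hδ0, hδ⟩ := hfdiff (τ r) (hτ0 r hr) (hτ1 r hr) (pf r) (hmem r hr)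
      (c / (C + 1)) (by positivity)
    rw [eventually_nhdsWithin_iff, Metric.eventually_nhds_iff]
    refine ⟨δ / (C + 1), by positivity, fun r' hdist hr' => ?_⟩
    have hrr : |r' - r| < δ / (C + 1) := by rwa [Real.dist_eq] at hdist
    have habs : (0:ℝ) ≤ |r' - r| := abs_nonneg _
    have hL2N : L2N (pf r' - pf r) = |r' - r| * L2N (q' - q) := by
      rw [hsub r r', L2N_smul]
    have hL2I : L2I (pf r' - pf r) (fq (τ r) (pf r)) =
        (r' - r) * L2I (q' - q) (fq (τ r) (pf r)) := by
      rw [hsub r r', L2I_smul]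
    have hτsub : τ r' - τ r = (r' - r) * (t' - t) := by simp only [hτdef]; ring
    have hcond : |τ r' - τ r| + L2N (pf r' - pf r) = |r' - r| * C := by
      rw [hL2N, hτsub, abs_mul, hCdef]; ring
    have hcondle : |τ r' - τ r| + L2N (pf r' - pf r) ≤ δ := by
      rw [hcond]
      calc |r' - r| * C ≤ (δ / (C + 1)) * C := mul_le_mul_of_nonneg_right hrr.le hC0
        _ ≤ δ := by
            rw [div_mul_eq_mul_div, div_le_iff₀ (by positivity)]
            nlinarith
    have hmain := hδ (τ r') (hτ0 r' hr') (hτ1 r' hr') (pf r') (hmem r' hr') hcondle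
    have heq : g r' - g r - (r' - r) • A r =
        f (τ r') (pf r') - f (τ r) (pf r) - (τ r' - τ r) * ft (τ r) (pf r) -
          L2I (pf r' - pf r) (fq (τ r) (pf r)) := by
      rw [hL2I, hτsub]
      simp only [hgdef, hAdef, smul_eq_mul]
      ring
    rw [Real.norm_eq_abs, Real.norm_eq_abs, heq]
    calc |f (τ r') (pf r') - f (τ r) (pf r) - (τ r' - τ r) * ft (τ r) (pf r) -
          L2I (pf r' - pf r) (fq (τ r) (pf r))| ≤
        (c / (C + 1)) * (|τ r' - τ r| + L2N (pf r' - pf r)) := hmain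
      _ = (c / (C + 1)) * (|r' - r| * C) := by rw [hcond]
      _ ≤ c * |r' - r| := by
          rw [div_mul_eq_mul_div, div_le_iff₀ (by positivity)]
          nlinarith
  have hA : ∀ r ∈ Set.Icc (0:ℝ) 1, ‖A r‖ ≤ L1N (q - q') + |t - t'| * M := by
    intro r hr
    have hft : |ft (τ r) (pf r)| ≤ M := by
      rw [hhj (τ r) (hτ0 r hr) (hτ1 r hr) (pf r) (hmem r hr)]
      exact abs_integral_xi_le hM0 hM (hfqbdd (τ r) (hτ0 r hr) (hτ1 r hr) (pf r) (hmem r hr))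
    have hQint : Integrable (q' - q) := (Qinf_integrable hq').sub (Qinf_integrable hq)
    have hL2I := abs_L2I_le_L1N hQint (hfqbdd (τ r) (hτ0 r hr) (hτ1 r hr) (pf r) (hmem r hr))
    rw [Real.norm_eq_abs]
    calc |A r| ≤ |(t' - t) * ft (τ r) (pf r)| + |L2I (q' - q) (fq (τ r) (pf r))| := by
          rw [hAdef]; exact abs_add_le _ _
      _ ≤ |t' - t| * M + L1N (q' - q) := by
          rw [abs_mul]
          exact add_le_add (mul_le_mul_of_nonneg_left hft (abs_nonneg _)) hL2I
      _ = L1N (q - q') + |t - t'| * M := by rw [L1N_sub_comm q' q, abs_sub_comm]; ring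
  have h0 : (0:ℝ) ∈ Set.Icc (0:ℝ) 1 := ⟨le_refl 0, zero_le_one⟩
  have h1 : (1:ℝ) ∈ Set.Icc (0:ℝ) 1 := ⟨zero_le_one, le_refl 1⟩
  have hmvt := (convex_Icc (0:ℝ) 1).norm_image_sub_le_of_norm_hasDerivWithin_le
    hderiv hA h0 h1
  have hpf0 : pf 0 = q := by funext s; simp [hpfdef]
  have hpf1 : pf 1 = q' := by funext s; simp [hpfdef]
  have hτt : τ 0 = t := by simp [hτdef]
  have hτt' : τ 1 = t' := by simp [hτdef]
  have hg0 : g 0 = f t q := by rw [hgdef]; simp only; rw [hτt, hpf0]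
  have hg1 : g 1 = f t' q' := by rw [hgdef]; simp only; rw [hτt', hpf1]
  rw [hg0, hg1] at hmvt
  simp only [Real.norm_eq_abs, sub_zero, abs_one, mul_one] at hmvt
  calc |f t q - f t' q'| = |f t' q' - f t q| := abs_sub_comm _ _
    _ ≤ L1N (q - q') + |t - t'| * M := hmvt



/-- `L¹`-Lipschitz continuity of the solution (Lemma 3.5).  If `f` solves
`∂_t f = ∫₀¹ ξ(∇_q f)` on `[0,t⋆) × Q_∞` with `|∇_q f(t,q)|_{L^∞} ≤ 1`, then `f` is
Lipschitz for the `L¹` norm in `q` (and Lipschitz in `t` with constant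
`sup_{|a| ≤ 1} |ξ(a)|`); in particular it extends to a function on `[0,t⋆) × Q₁`
satisfying the same Lipschitz bound (hence continuous for the `L¹` norm). -/
theorem L1_Lipschitz_continuity_of_solution
    {D : ℕ} (hD : 1 ≤ D) (ξ : Mat D → ℝ) (hξ : Continuous ξ)
    (tstar : ℝ) (htstar : 0 < tstar)
    (f ft : ℝ → SPath D → ℝ) (fq : ℝ → SPath D → SPath D)
    -- joint Fréchet differentiability of `f` at every point of `[0,t⋆) × Q_∞`, the
    -- `q`-derivative being taken with respect to the `L²` norm and represented by the
    -- gradient `fq t q`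
    (hfdiff : ∀ t : ℝ, 0 ≤ t → t < tstar → ∀ q ∈ Qinf D,
      ∀ ε > 0, ∃ δ > 0, ∀ t' : ℝ, 0 ≤ t' → t' < tstar → ∀ q' ∈ Qinf D,
        |t' - t| + L2N (q' - q) ≤ δ →
        |f t' q' - f t q - (t' - t) * ft t q - L2I (q' - q) (fq t q)| ≤
          ε * (|t' - t| + L2N (q' - q)))
    -- `∇_q f(t,q) ∈ L^∞` with `|∇_q f(t,q)|_{L^∞} ≤ 1`
    (hfqbdd : ∀ t : ℝ, 0 ≤ t → t < tstar → ∀ q ∈ Qinf D, ∀ s : UI, ‖fq t q s‖ ≤ 1)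
    -- the Hamilton–Jacobi equation `∂_t f(t,q) = ∫₀¹ ξ(∇_q f(t,q)(u)) du`
    (hhj : ∀ t : ℝ, 0 ≤ t → t < tstar → ∀ q ∈ Qinf D, ft t q = ∫ u, ξ (fq t q u)) :
    (∀ t : ℝ, 0 ≤ t → t < tstar → ∀ t' : ℝ, 0 ≤ t' → t' < tstar →
      ∀ q ∈ Qinf D, ∀ q' ∈ Qinf D,
        |f t q - f t' q'| ≤
          L1N (q - q') + |t - t'| * sSup ((fun a => |ξ a|) '' {a : Mat D | ‖a‖ ≤ 1})) ∧
    ∃ fbar : ℝ → SPath D → ℝ,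
      (∀ t : ℝ, 0 ≤ t → t < tstar → ∀ q ∈ Qinf D, fbar t q = f t q) ∧
      (∀ t : ℝ, 0 ≤ t → t < tstar → ∀ t' : ℝ, 0 ≤ t' → t' < tstar →
        ∀ q ∈ Q1 D, ∀ q' ∈ Q1 D,
          |fbar t q - fbar t' q'| ≤
            L1N (q - q') + |t - t'| * sSup ((fun a => |ξ a|) '' {a : Mat D | ‖a‖ ≤ 1})) := by
  classical
  have hball : {a : Mat D | ‖a‖ ≤ 1} = Metric.closedBall (0 : Mat D) 1 := by
    ext a; simp [Metric.mem_closedBall, dist_zero_right]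
  have hbdd : BddAbove ((fun a => |ξ a|) '' {a : Mat D | ‖a‖ ≤ 1}) := by
    rw [hball]
    exact ((isCompact_closedBall (0 : Mat D) 1).image (continuous_abs.comp hξ)).bddAbove
  set M := sSup ((fun a => |ξ a|) '' {a : Mat D | ‖a‖ ≤ 1}) with hMdef
  have hM : ∀ a : Mat D, ‖a‖ ≤ 1 → |ξ a| ≤ M := fun a ha => le_csSup hbdd ⟨a, ha, rfl⟩
  have hM0 : 0 ≤ M := le_trans (abs_nonneg (ξ 0)) (hM 0 (by simp))
  have part1 : ∀ t : ℝ, 0 ≤ t → t < tstar → ∀ t' : ℝ, 0 ≤ t' → t' < tstar →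
      ∀ q ∈ Qinf D, ∀ q' ∈ Qinf D, |f t q - f t' q'| ≤ L1N (q - q') + |t - t'| * M :=
    fun t ht0 ht t' ht0' ht' q hq q' hq' =>
      key_lipschitz ξ hM0 hM tstar f ft fq hfdiff hfqbdd hhj ht0 ht ht0' ht' hq hq'
  refine ⟨part1, ?_⟩
  set fbar : ℝ → SPath D → ℝ :=
    fun t q => sInf ((fun q₀ => f t q₀ + L1N (q - q₀)) '' Qinf D) with hfbardef
  have hne : ∀ (t : ℝ) (q : SPath D), ((fun q₀ => f t q₀ + L1N (q - q₀)) '' Qinf D).Nonempty :=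
    fun t q => ⟨_, Set.mem_image_of_mem _ Qinf_zero⟩
  have hlb : ∀ (t : ℝ), 0 ≤ t → t < tstar → ∀ (q : SPath D), Integrable q →
      BddBelow ((fun q₀ => f t q₀ + L1N (q - q₀)) '' Qinf D) := by
    intro t ht0 ht q hqi
    refine ⟨f t 0 - L1N q, ?_⟩
    rintro x ⟨q₀, hq₀, rfl⟩
    have h1 := part1 t ht0 ht t ht0 ht 0 Qinf_zero q₀ hq₀
    have h2 : L1N ((0:SPath D) - q₀) = L1N q₀ := by
      rw [L1N_sub_comm, sub_zero]
    rw [h2, sub_self, abs_zero, zero_mul, add_zero] at h1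
    have h3 : L1N q₀ ≤ L1N (q - q₀) + L1N q := by
      have h := L1N_triangle ((Qinf_integrable hq₀).sub hqi) hqi
      have heq : (q₀ - q) + q = q₀ := by funext s; simp
      rw [heq, L1N_sub_comm q₀ q] at h
      linarith
    have h4 := le_of_abs_le h1
    dsimp only
    linarith
  have hQ1int : ∀ q ∈ Q1 D, Integrable q := fun q hq =>
    (integrable_norm_iff hq.1.measurable.aestronglyMeasurable).mp hq.2
  have hlip : ∀ t : ℝ, 0 ≤ t → t < tstar → ∀ t' : ℝ, 0 ≤ t' → t' < tstar →
      ∀ q : SPath D, Integrable q → ∀ q' : SPath D, Integrable q' →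
      fbar t q ≤ fbar t' q' + (L1N (q - q') + |t - t'| * M) := by
    intro t ht0 ht t' ht0' ht' q hqi q' hq'i
    have key2 : ∀ x ∈ (fun q₀ => f t' q₀ + L1N (q' - q₀)) '' Qinf D,
        fbar t q - (L1N (q - q') + |t - t'| * M) ≤ x := by
      rintro x ⟨q₀, hq₀, rfl⟩
      have hstep1 : fbar t q ≤ f t q₀ + L1N (q - q₀) := by
        have h := csInf_le (hlb t ht0 ht q hqi) ⟨q₀, hq₀, rfl⟩
        dsimp only at h
        exact h
      have hstep2 := part1 t ht0 ht t' ht0' ht' q₀ hq₀ q₀ hq₀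
      rw [L1N_self_sub, zero_add] at hstep2
      have hstep2' : f t q₀ - f t' q₀ ≤ |t - t'| * M := le_of_abs_le hstep2
      have htr : L1N (q - q₀) ≤ L1N (q - q') + L1N (q' - q₀) := by
        have h := L1N_triangle (hqi.sub hq'i) (hq'i.sub (Qinf_integrable hq₀))
        have heq : (q - q') + (q' - q₀) = q - q₀ := by funext s; simp
        rwa [heq] at h
      dsimp only
      linarith
    have := le_csInf (hne t' q') key2
    linarith
  refine ⟨fbar, ?_, ?_⟩
  · intro t ht0 ht q hq
    apply le_antisymm
    · have h := csInf_le (hlb t ht0 ht q (Qinf_integrable hq)) ⟨q, hq, rfl⟩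
      dsimp only at h
      rwa [L1N_self_sub, add_zero] at h
    · refine le_csInf (hne t q) ?_
      rintro x ⟨q₀, hq₀, rfl⟩
      have h := part1 t ht0 ht t ht0 ht q hq q₀ hq₀
      rw [sub_self, abs_zero, zero_mul, add_zero] at h
      have := le_of_abs_le h
      dsimp only
      linarith
  · intro t ht0 ht t' ht0' ht' q hq q' hq'
    have hqi := hQ1int q hq
    have hq'i := hQ1int q' hq'
    rw [abs_sub_le_iff]
    constructor
    · have := hlip t ht0 ht t' ht0' ht' q hqi q' hq'i
      linarith
    · have := hlip t' ht0' ht' t ht0 ht q' hq'i q hqi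
      rw [L1N_sub_comm q' q, abs_sub_comm t' t] at this
      linarith
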